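/- Fix a ∈ (0, 1/2] and let λ₁ = (sin(πa) − π·a(1−a)) / (sin(πa)·(R(a) − 1)). For λ > 0 define, for r ∈ (0,1), G_λ(r) = 1/2 − log(e^{R(a)/2}/r') + [r²·sin(πa) − 2(1−a)·(E_a(r) − r'²·K_a(r))] / (2λ·r²·r'²·sin(πa)), where r' = √(1−r²). Then lim_{r→0⁺} G_λ(r) exists and equals (R(a) − 1)/(2λ)·(λ₁ − λ); in particular the limit is positive if 0 < λ < λ₁, zero if λ = λ₁, and negative if λ > λ₁. -/

import Mathlib

open Real Set Filter Topology

/-- The digamma function `ψ(x) = Γ'(x)/Γ(x)`. -/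
noncomputable def digamma (x : ℝ) : ℝ := deriv Real.Gamma x / Real.Gamma x

/-- The Ramanujan constant function `R(x) = -2γ - ψ(x) - ψ(1-x)`. -/
noncomputable def ramanujanR (x : ℝ) : ℝ :=
  -2 * Real.eulerMascheroniConstant - digamma x - digamma (1 - x)

/-- The Riemann zeta function as a real series `ζ(s) = Σ_{n=1}^∞ n^{-s}`. -/
noncomputable def zetaR (s : ℝ) : ℝ := ∑' n : ℕ, 1 / ((n : ℝ) + 1) ^ s

/-- The generalized elliptic integral of the first kind
`K_a(r) = (π/2) Σ_{n=0}^∞ ((a)_n (1-a)_n / (n!)^2) r^(2n)`. -/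
noncomputable def Ka (a r : ℝ) : ℝ :=
  Real.pi / 2 * ∑' n : ℕ,
    (Polynomial.eval a (ascPochhammer ℝ n) * Polynomial.eval (1 - a) (ascPochhammer ℝ n)
      / (Nat.factorial n : ℝ) ^ 2) * r ^ (2 * n)

/-- The generalized elliptic integral of the second kind
`E_a(r) = (π/2) Σ_{n=0}^∞ ((a-1)_n (1-a)_n / (n!)^2) r^(2n)`. -/
noncomputable def Ea (a r : ℝ) : ℝ :=
  Real.pi / 2 * ∑' n : ℕ,
    (Polynomial.eval (a - 1) (ascPochhammer ℝ n) * Polynomial.eval (1 - a) (ascPochhammer ℝ n)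
      / (Nat.factorial n : ℝ) ^ 2) * r ^ (2 * n)

lemma diffGamma {x : ℝ} (hx : 0 < x) : DifferentiableAt ℝ Real.Gamma x :=
  Real.differentiableAt_Gamma fun m ↦ ((neg_nonpos.mpr m.cast_nonneg).trans_lt hx).ne'

lemma deriv_logGamma {x : ℝ} (hx : 0 < x) :
    deriv (Real.log ∘ Real.Gamma) x = digamma x := by
  rw [Function.comp_def, deriv.log (diffGamma hx) (Real.Gamma_pos_of_pos hx).ne', digamma]

lemma digamma_mono' {x y : ℝ} (hx : 0 < x) (hxy : x < y) : digamma x ≤ digamma y := by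
  have hy : 0 < y := hx.trans hxy
  have hc := Real.convexOn_log_Gamma
  have hd : ∀ {z : ℝ}, 0 < z → DifferentiableAt ℝ (Real.log ∘ Real.Gamma) z := fun hz =>
    ((diffGamma hz).log (Real.Gamma_pos_of_pos hz).ne')
  have h1 := hc.deriv_le_slope (mem_Ioi.2 hx) (mem_Ioi.2 hy) hxy (hd hx)
  have h2 := hc.slope_le_deriv (mem_Ioi.2 hx) (mem_Ioi.2 hy) hxy (hd hy)
  rw [deriv_logGamma hx] at h1
  rw [deriv_logGamma hy] at h2
  linarith

lemma digamma_one : digamma 1 = -Real.eulerMascheroniConstant := by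
  rw [digamma, Real.hasDerivAt_Gamma_one.deriv, Real.Gamma_one, div_one]

lemma digamma_half : digamma (1/2) = -Real.eulerMascheroniConstant - 2 * Real.log 2 := by
  rw [digamma, Real.hasDerivAt_Gamma_one_half.deriv, Real.Gamma_one_half_eq]
  have : √π ≠ 0 := by positivity
  field_simp
  ring

lemma R_gt_one {a : ℝ} (ha : a ∈ Set.Ioc (0:ℝ) (1/2)) : 1 < ramanujanR a := by
  obtain ⟨ha0, ha2⟩ := ha
  have h1 : digamma a ≤ digamma (1/2) := by
    rcases eq_or_lt_of_le ha2 with rfl | h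
    · exact le_refl _
    · exact digamma_mono' ha0 h
  have h2 : digamma (1 - a) ≤ digamma 1 := by
    rcases eq_or_lt_of_le (by linarith : 1 - a ≤ 1) with h | h
    · rw [h]
    · exact digamma_mono' (by linarith) h
  rw [digamma_one] at h2
  rw [digamma_half] at h1
  have hl2 : (0.6931471803 : ℝ) < Real.log 2 := Real.log_two_gt_d9
  rw [ramanujanR]; linarith

noncomputable def pc (a : ℝ) (n : ℕ) : ℝ :=
  Polynomial.eval a (ascPochhammer ℝ n) * Polynomial.eval (1 - a) (ascPochhammer ℝ n)
    / (Nat.factorial n : ℝ) ^ 2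

noncomputable def pd (a : ℝ) (n : ℕ) : ℝ :=
  Polynomial.eval (a - 1) (ascPochhammer ℝ n) * Polynomial.eval (1 - a) (ascPochhammer ℝ n)
    / (Nat.factorial n : ℝ) ^ 2

noncomputable def ec (a : ℝ) (n : ℕ) : ℝ := pd a (n+1) - pc a (n+1) + pc a n

lemma poch_nonneg {x : ℝ} (hx : 0 ≤ x) (n : ℕ) : 0 ≤ (ascPochhammer ℝ n).eval x := by
  induction n with
  | zero => simp
  | succ n ih =>
    rw [ascPochhammer_succ_eval]
    exact mul_nonneg ih (by positivity)

lemma poch_le {x : ℝ} (hx0 : 0 ≤ x) (hx1 : x ≤ 1) (n : ℕ) :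
    (ascPochhammer ℝ n).eval x ≤ n.factorial := by
  induction n with
  | zero => simp
  | succ n ih =>
    rw [ascPochhammer_succ_eval, Nat.factorial_succ]
    push_cast
    have h1 : x + n ≤ 1 + n := by linarith
    have := poch_nonneg hx0 n
    calc (ascPochhammer ℝ n).eval x * (x + n) ≤ (n.factorial : ℝ) * (1 + n) := by
          apply mul_le_mul ih h1 (by positivity) (by positivity)
      _ = (n + 1) * n.factorial := by ring

lemma poch_abs_le {x : ℝ} (hx0 : -1 ≤ x) (hx1 : x ≤ 0) (n : ℕ) :
    |(ascPochhammer ℝ n).eval x| ≤ n.factorial := by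
  cases n with
  | zero => simp
  | succ n =>
    rw [ascPochhammer_succ_left, Polynomial.eval_mul, Polynomial.eval_comp, Polynomial.eval_X,
      Polynomial.eval_add, Polynomial.eval_X, Polynomial.eval_one, abs_mul]
    have h1 : |x| ≤ 1 := abs_le.2 ⟨hx0, by linarith⟩
    have h2 : |(ascPochhammer ℝ n).eval (x + 1)| ≤ n.factorial := by
      rw [abs_of_nonneg (poch_nonneg (by linarith) n)]
      exact poch_le (by linarith) (by linarith) n
    calc |x| * |(ascPochhammer ℝ n).eval (x + 1)| ≤ 1 * n.factorial := by
          apply mul_le_mul h1 h2 (abs_nonneg _) one_pos.le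
      _ ≤ (n+1).factorial := by
          rw [one_mul, Nat.factorial_succ]
          push_cast
          have : (1:ℝ) ≤ n.factorial := Nat.one_le_cast.2 n.factorial_pos
          nlinarith

lemma pc_abs_le {a : ℝ} (ha : a ∈ Set.Ioc (0:ℝ) (1/2)) (n : ℕ) : |pc a n| ≤ 1 := by
  obtain ⟨h0, h2⟩ := ha
  have hf : (0:ℝ) < n.factorial := by positivity
  rw [pc, abs_div, abs_mul, abs_of_nonneg (poch_nonneg h0.le n),
    abs_of_nonneg (poch_nonneg (by linarith) n), abs_of_nonneg (by positivity : (0:ℝ) ≤ (n.factorial:ℝ)^2)]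
  rw [div_le_one (by positivity)]
  calc (ascPochhammer ℝ n).eval a * (ascPochhammer ℝ n).eval (1-a)
      ≤ (n.factorial : ℝ) * n.factorial := by
        apply mul_le_mul (poch_le h0.le (by linarith) n) (poch_le (by linarith) (by linarith) n)
          (poch_nonneg (by linarith) n) hf.le
    _ = (n.factorial : ℝ)^2 := by ring

lemma pd_abs_le {a : ℝ} (ha : a ∈ Set.Ioc (0:ℝ) (1/2)) (n : ℕ) : |pd a n| ≤ 1 := by
  obtain ⟨h0, h2⟩ := ha
  have hf : (0:ℝ) < n.factorial := by positivity
  rw [pd, abs_div, abs_mul, abs_of_nonneg (poch_nonneg (by linarith : (0:ℝ) ≤ 1 - a) n),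
    abs_of_nonneg (by positivity : (0:ℝ) ≤ ((n.factorial:ℝ))^2)]
  rw [div_le_one (by positivity)]
  calc |(ascPochhammer ℝ n).eval (a-1)| * (ascPochhammer ℝ n).eval (1-a)
      ≤ (n.factorial : ℝ) * n.factorial := by
        apply mul_le_mul (poch_abs_le (by linarith) (by linarith) n)
          (poch_le (by linarith) (by linarith) n) (poch_nonneg (by linarith) n) hf.le
    _ = (n.factorial : ℝ)^2 := by ring

lemma ec_abs_le {a : ℝ} (ha : a ∈ Set.Ioc (0:ℝ) (1/2)) (n : ℕ) : |ec a n| ≤ 3 := by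
  have h1 := pd_abs_le ha (n+1)
  have h2 := pc_abs_le ha (n+1)
  have h3 := pc_abs_le ha n
  rw [ec]
  calc |pd a (n+1) - pc a (n+1) + pc a n| ≤ |pd a (n+1)| + |pc a (n+1)| + |pc a n| := by
        apply (abs_add_le _ _).trans
        gcongr
        exact abs_sub _ _
    _ ≤ 3 := by linarith

lemma summable_aux {u : ℕ → ℝ} {M t : ℝ} (hM : ∀ n, |u n| ≤ M) (ht : |t| < 1) :
    Summable (fun n => u n * t ^ n) := by
  apply Summable.of_norm_bounded (g := fun n => M * |t| ^ n)
    ((summable_geometric_of_lt_one (abs_nonneg t) ht).mul_left M)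
  intro n
  rw [norm_mul, norm_pow, Real.norm_eq_abs, Real.norm_eq_abs]
  exact mul_le_mul_of_nonneg_right (hM n) (by positivity)

lemma ec_zero {a : ℝ} : ec a 0 = a := by
  simp [ec, pd, pc, ascPochhammer_one]
  ring

noncomputable def gfun (a : ℝ) (t : ℝ) : ℝ := ∑' n : ℕ, ec a n * t ^ n

lemma expansion {a : ℝ} (ha : a ∈ Set.Ioc (0:ℝ) (1/2)) {t : ℝ} (ht : |t| < 1) :
    (∑' n : ℕ, pd a n * t^n) - (1-t) * (∑' n : ℕ, pc a n * t^n) = t * gfun a t := by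
  have Sc : Summable (fun n : ℕ => pc a n * t^n) := summable_aux (pc_abs_le ha) ht
  have Sd : Summable (fun n : ℕ => pd a n * t^n) := summable_aux (pd_abs_le ha) ht
  have S1 : Summable (fun n : ℕ => (pd a (n+1) - pc a (n+1)) * t^n) :=
    summable_aux (M := 2) (fun n => (abs_sub _ _).trans (by
      have := pd_abs_le ha (n+1); have := pc_abs_le ha (n+1); linarith)) ht
  have Sdc : Summable (fun n : ℕ => (pd a n - pc a n) * t^n) := by
    have := Sd.sub Sc
    simpa [sub_mul] using this
  have key : (∑' n : ℕ, pd a n * t^n) - (∑' n : ℕ, pc a n * t^n)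
      = t * ∑' n : ℕ, (pd a (n+1) - pc a (n+1)) * t^n := by
    rw [← Summable.tsum_sub Sd Sc]
    calc ∑' n : ℕ, (pd a n * t^n - pc a n * t^n)
        = ∑' n : ℕ, (pd a n - pc a n) * t^n := by congr 1; funext n; ring
      _ = (pd a 0 - pc a 0) * t^0 + ∑' n : ℕ, (pd a (n+1) - pc a (n+1)) * t^(n+1) :=
          Summable.tsum_eq_zero_add Sdc
      _ = t * ∑' n : ℕ, (pd a (n+1) - pc a (n+1)) * t^n := by
          rw [show pd a 0 - pc a 0 = 0 by simp [pd, pc], zero_mul, zero_add, ← tsum_mul_left]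
          congr 1; funext n; ring
  have expand : (∑' n : ℕ, pd a n * t^n) - (1-t) * (∑' n : ℕ, pc a n * t^n)
      = t * (∑' n : ℕ, (pd a (n+1) - pc a (n+1)) * t^n) + t * (∑' n : ℕ, pc a n * t^n) := by
    rw [← key]; ring
  rw [expand, ← mul_add, gfun]
  congr 1
  rw [← Summable.tsum_add S1 Sc]
  congr 1; funext n; rw [ec]; ring

lemma gfun_est {a : ℝ} (ha : a ∈ Set.Ioc (0:ℝ) (1/2)) {t : ℝ} (ht0 : 0 ≤ t) (ht : t ≤ 1/2) :
    |gfun a t - a| ≤ 6 * t := by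
  have hab : |t| < 1 := by rw [abs_of_nonneg ht0]; linarith
  have Se : Summable (fun n : ℕ => ec a n * t^n) := summable_aux (ec_abs_le ha) hab
  have h0 : gfun a t = a + t * ∑' n : ℕ, ec a (n+1) * t^n := by
    rw [gfun, Summable.tsum_eq_zero_add Se, ec_zero, pow_zero, mul_one]
    congr 1
    rw [← tsum_mul_left]; congr 1; funext n; ring
  have hb : |∑' n : ℕ, ec a (n+1) * t^n| ≤ 6 := by
    have hs : HasSum (fun n : ℕ => 3 * (1/2:ℝ)^n) 6 := by
      have h := (hasSum_geometric_of_lt_one (by norm_num : (0:ℝ) ≤ 1/2)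
        (by norm_num : (1/2:ℝ) < 1)).mul_left 3
      norm_num at h
      convert h using 2 <;> norm_num
    rw [← Real.norm_eq_abs]
    apply tsum_of_norm_bounded hs
    intro n
    rw [Real.norm_eq_abs, abs_mul, abs_pow]
    have h1 := ec_abs_le ha (n+1)
    have h2 : |t|^n ≤ (1/2:ℝ)^n := by
      apply pow_le_pow_left₀ (abs_nonneg t)
      rw [abs_of_nonneg ht0]; exact ht
    exact mul_le_mul h1 h2 (by positivity) (by norm_num)
  rw [h0, add_sub_cancel_left, abs_mul, abs_of_nonneg ht0]
  calc t * |∑' n : ℕ, ec a (n+1) * t^n| ≤ t * 6 :=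
        mul_le_mul_of_nonneg_left hb ht0
    _ = 6 * t := by ring

lemma tendsto_gsq {a : ℝ} (ha : a ∈ Set.Ioc (0:ℝ) (1/2)) :
    Filter.Tendsto (fun r : ℝ => gfun a (r^2)) (nhdsWithin 0 (Set.Ioi 0)) (nhds a) := by
  have key : Filter.Tendsto (fun r : ℝ => gfun a (r^2) - a) (nhdsWithin 0 (Set.Ioi 0))
      (nhds 0) := by
    apply squeeze_zero_norm' (a := fun r : ℝ => 6 * r^2)
    · have hev : ∀ᶠ r : ℝ in nhdsWithin 0 (Set.Ioi 0), |r| < 1/2 := by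
        apply Filter.Eventually.filter_mono nhdsWithin_le_nhds
        have := Metric.ball_mem_nhds (0:ℝ) (show (0:ℝ) < 1/2 by norm_num)
        filter_upwards [this] with r hr
        simpa [Real.dist_eq] using hr
      filter_upwards [hev] with r hr
      rw [Real.norm_eq_abs]
      apply gfun_est ha (by positivity)
      nlinarith [abs_nonneg r, sq_abs r]
    · have : Filter.Tendsto (fun r : ℝ => 6 * r^2) (nhds 0) (nhds 0) := by
        have hc : Continuous (fun r : ℝ => 6 * r^2) := by continuity
        simpa using hc.tendsto 0
      exact this.mono_left nhdsWithin_le_nhds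
  have := key.add_const a
  simpa using this

lemma EK_eq {a : ℝ} (ha : a ∈ Set.Ioc (0:ℝ) (1/2)) {r : ℝ} (hr : |r| < 1) :
    Ea a r - (1 - r^2) * Ka a r = Real.pi/2 * (r^2 * gfun a (r^2)) := by
  have hE : Ea a r = Real.pi/2 * ∑' n : ℕ, pd a n * (r^2)^n := by
    rw [Ea]; congr 1; apply tsum_congr; intro n
    rw [pd, pow_mul]
  have hK : Ka a r = Real.pi/2 * ∑' n : ℕ, pc a n * (r^2)^n := by
    rw [Ka]; congr 1; apply tsum_congr; intro n
    rw [pc, pow_mul]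
  have ht : |r^2| < 1 := by
    rw [abs_of_nonneg (sq_nonneg r)]
    nlinarith [sq_abs r, abs_nonneg r]
  rw [hE, hK, show Real.pi/2 * (∑' n : ℕ, pd a n * (r^2)^n)
      - (1-r^2) * (Real.pi/2 * ∑' n : ℕ, pc a n * (r^2)^n)
      = Real.pi/2 * ((∑' n : ℕ, pd a n * (r^2)^n)
        - (1-r^2) * ∑' n : ℕ, pc a n * (r^2)^n) from by ring,
    expansion ha ht]

theorem stmt16 (a : ℝ) (ha : a ∈ Set.Ioc (0 : ℝ) (1/2)) (lam : ℝ) (hlam : 0 < lam)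
    (lam1 : ℝ)
    (hlam1 : lam1 = (Real.sin (Real.pi * a) - Real.pi * a * (1 - a)) /
      (Real.sin (Real.pi * a) * (ramanujanR a - 1))) :
    Filter.Tendsto (fun r : ℝ =>
      1/2 - Real.log (Real.exp (ramanujanR a / 2) / Real.sqrt (1 - r^2))
        + (r^2 * Real.sin (Real.pi * a)
            - 2 * (1 - a) * (Ea a r - (Real.sqrt (1 - r^2))^2 * Ka a r))
          / (2 * lam * r^2 * (Real.sqrt (1 - r^2))^2 * Real.sin (Real.pi * a)))
      (nhdsWithin 0 (Set.Ioi 0))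
      (nhds ((ramanujanR a - 1) / (2 * lam) * (lam1 - lam))) ∧
    (lam < lam1 → 0 < (ramanujanR a - 1) / (2 * lam) * (lam1 - lam)) ∧
    (lam = lam1 → (ramanujanR a - 1) / (2 * lam) * (lam1 - lam) = 0) ∧
    (lam1 < lam → (ramanujanR a - 1) / (2 * lam) * (lam1 - lam) < 0) := by
  have hR : 1 < ramanujanR a := R_gt_one ha
  have hs : 0 < Real.sin (Real.pi * a) := by
    apply Real.sin_pos_of_pos_of_lt_pi
    · have := Real.pi_pos
      exact mul_pos this ha.1
    · have := Real.pi_pos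
      nlinarith [ha.2]
  refine ⟨?_, ?_, ?_, ?_⟩
  · -- the limit
    have hVal : (ramanujanR a - 1) / (2 * lam) * (lam1 - lam)
        = 1/2 - ramanujanR a/2 + 0
          + (Real.sin (Real.pi * a) - Real.pi * (1-a) * a)
            / (2 * lam * (1 - (0:ℝ)^2) * Real.sin (Real.pi * a)) := by
      rw [hlam1]
      have h1 : Real.sin (Real.pi * a) ≠ 0 := hs.ne'
      have h2 : lam ≠ 0 := hlam.ne'
      have h3 : ramanujanR a - 1 ≠ 0 := by linarith
      field_simp
      ring
    rw [hVal]
    have T1 : Filter.Tendsto (fun r : ℝ => Real.log (Real.sqrt (1-r^2)))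
        (nhdsWithin 0 (Set.Ioi 0)) (nhds 0) := by
      have hc : Filter.Tendsto (fun r : ℝ => Real.sqrt (1-r^2)) (nhds 0) (nhds 1) := by
        have hcont : Continuous fun r : ℝ => Real.sqrt (1-r^2) := by continuity
        have := hcont.tendsto 0
        simpa using this
      have := (Real.continuousAt_log one_ne_zero).tendsto.comp hc
      rw [Real.log_one] at this
      exact this.mono_left nhdsWithin_le_nhds
    have T2 : Filter.Tendsto
        (fun r : ℝ => Real.sin (Real.pi * a) - Real.pi * (1-a) * gfun a (r^2))
        (nhdsWithin 0 (Set.Ioi 0)) (nhds (Real.sin (Real.pi * a) - Real.pi * (1-a) * a)) :=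
      tendsto_const_nhds.sub (tendsto_const_nhds.mul (tendsto_gsq ha))
    have T3 : Filter.Tendsto (fun r : ℝ => 2 * lam * (1 - r^2) * Real.sin (Real.pi * a))
        (nhdsWithin 0 (Set.Ioi 0))
        (nhds (2 * lam * (1 - (0:ℝ)^2) * Real.sin (Real.pi * a))) := by
      have hcont : Continuous fun r : ℝ => 2 * lam * (1 - r^2) * Real.sin (Real.pi * a) := by
        continuity
      exact (hcont.tendsto 0).mono_left nhdsWithin_le_nhds
    have hD : (2 * lam * (1 - (0:ℝ)^2) * Real.sin (Real.pi * a)) ≠ 0 := by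
      have : (0:ℝ) < 2 * lam * (1 - (0:ℝ)^2) * Real.sin (Real.pi * a) := by
        have h01 : (0:ℝ) < 1 - (0:ℝ)^2 := by norm_num
        exact mul_pos (mul_pos (mul_pos two_pos hlam) h01) hs
      exact this.ne'
    have T : Filter.Tendsto (fun r : ℝ =>
        1/2 - ramanujanR a/2 + Real.log (Real.sqrt (1-r^2))
          + (Real.sin (Real.pi * a) - Real.pi * (1-a) * gfun a (r^2))
            / (2 * lam * (1 - r^2) * Real.sin (Real.pi * a)))
        (nhdsWithin 0 (Set.Ioi 0))
        (nhds (1/2 - ramanujanR a/2 + 0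
          + (Real.sin (Real.pi * a) - Real.pi * (1-a) * a)
            / (2 * lam * (1 - (0:ℝ)^2) * Real.sin (Real.pi * a)))) :=
      (tendsto_const_nhds.add T1).add (T2.div T3 hD)
    apply Filter.Tendsto.congr' _ T
    filter_upwards [Ioo_mem_nhdsGT_of_mem (by constructor <;> norm_num : (0:ℝ) ∈ Set.Ico (0:ℝ) 1)]
      with r hr
    obtain ⟨hr0, hr1⟩ := hr
    have h1r : (0:ℝ) < 1 - r^2 := by nlinarith
    have hsq : (Real.sqrt (1-r^2))^2 = 1 - r^2 := Real.sq_sqrt h1r.le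
    have hlog : Real.log (Real.exp (ramanujanR a/2) / Real.sqrt (1-r^2))
        = ramanujanR a/2 - Real.log (Real.sqrt (1-r^2)) := by
      rw [Real.log_div (Real.exp_ne_zero _) (by positivity), Real.log_exp]
    have hfrac : (r^2 * Real.sin (Real.pi * a)
          - 2 * (1-a) * (Ea a r - (Real.sqrt (1-r^2))^2 * Ka a r))
          / (2 * lam * r^2 * (Real.sqrt (1-r^2))^2 * Real.sin (Real.pi * a))
        = (Real.sin (Real.pi * a) - Real.pi * (1-a) * gfun a (r^2))
            / (2 * lam * (1 - r^2) * Real.sin (Real.pi * a)) := by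
      rw [hsq, EK_eq ha (by rw [abs_of_pos hr0]; exact hr1),
        show r^2 * Real.sin (Real.pi * a)
            - 2 * (1-a) * (Real.pi/2 * (r^2 * gfun a (r^2)))
          = r^2 * (Real.sin (Real.pi * a) - Real.pi * (1-a) * gfun a (r^2)) from by ring,
        show 2 * lam * r^2 * (1-r^2) * Real.sin (Real.pi * a)
          = r^2 * (2 * lam * (1-r^2) * Real.sin (Real.pi * a)) from by ring,
        mul_div_mul_left _ _ (pow_ne_zero 2 hr0.ne')]
    rw [hlog, hfrac]
    ring
  · intro h
    have h1 : 0 < (ramanujanR a - 1) / (2 * lam) := by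
      apply div_pos (by linarith) (by linarith)
    exact mul_pos h1 (by linarith)
  · intro h
    rw [h, sub_self, mul_zero]
  · intro h
    have h1 : 0 < (ramanujanR a - 1) / (2 * lam) := by
      apply div_pos (by linarith) (by linarith)
    exact mul_neg_of_pos_of_neg h1 (by linarith)
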